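/- arXiv:0811.3848 — 2 statements merged into one kernel-verified Lean document; each statement's English description precedes it below -/
import Mathlib

section
/- Let 𝒜 be a C*-algebra, 𝒥 a closed two-sided ideal of 𝒜, and a, b ∈ 𝒥. Then for every n ≥ 1: hₙ(M_{a,b}^𝒥) ≤ hₙ(M_{a,b}) ≤ aₙ(M_{a,b}) ≤ aₙ(M_{a,b}^𝒥). -/
open scoped BigOperators

noncomputable section

/-- The space of complex null sequences `c₀`. -/
def c0 : Set (ℕ → ℂ) := {α | Filter.Tendsto α Filter.atTop (nhds 0)}

/-- `rearrSum α n` is the supremum of `∑_{i ∈ F} |α i|` over finite sets `F ⊆ ℕ` with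
`|F| = n`; for a null sequence it equals `α*₁ + ⋯ + α*ₙ` where `α*` is the decreasing
rearrangement of `(|α_n|)`. -/
def rearrSum (α : ℕ → ℂ) (n : ℕ) : ℝ :=
  sSup ((fun F : Finset ℕ => ∑ i ∈ F, ‖α i‖) '' {F | F.card = n})

/-- The decreasing rearrangement of a null sequence, 0-indexed:
`rearr α n = α*_{n+1}`. -/
def rearr (α : ℕ → ℂ) (n : ℕ) : ℝ := rearrSum α (n + 1) - rearrSum α n

/-- A Calkin space: a linear subspace of `c₀` containing every null sequence whose
decreasing rearrangement is dominated termwise by that of one of its members. -/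
def IsCalkinSpace (I : Set (ℕ → ℂ)) : Prop :=
  I ⊆ c0 ∧ (0 : ℕ → ℂ) ∈ I ∧
  (∀ α ∈ I, ∀ β ∈ I, α + β ∈ I) ∧
  (∀ (c : ℂ), ∀ α ∈ I, c • α ∈ I) ∧
  (∀ α ∈ I, ∀ β ∈ c0, (∀ n, rearr β n ≤ rearr α n) → β ∈ I)

/-- `tensorSum α β n` is the supremum of `∑_{(i,j) ∈ F} |α i| |β j|` over finite
`F ⊆ ℕ × ℕ` with `|F| = n`; it equals `(α⊗β)₁ + ⋯ + (α⊗β)ₙ`. -/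
def tensorSum (α β : ℕ → ℂ) (n : ℕ) : ℝ :=
  sSup ((fun F : Finset (ℕ × ℕ) => ∑ p ∈ F, ‖α p.1‖ * ‖β p.2‖) '' {F | F.card = n})

/-- The tensor sequence `α⊗β`: the decreasing rearrangement of the double sequence
`(|α_m β_n|)_{m,n}`, 0-indexed: `tensorSeq α β n = (α⊗β)_{n+1}`. -/
def tensorSeq (α β : ℕ → ℂ) (n : ℕ) : ℝ := tensorSum α β (n + 1) - tensorSum α β n

/-- Embedding of real sequences into complex sequences. -/
def toC (f : ℕ → ℝ) : ℕ → ℂ := fun n => (f n : ℂ)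

/-- The tensor product `𝔦⊗𝔧` of two Calkin spaces: the smallest Calkin space
containing `α⊗β` for all `α ∈ 𝔦`, `β ∈ 𝔧`. -/
def calkinTensor (I J : Set (ℕ → ℂ)) : Set (ℕ → ℂ) :=
  ⋂₀ {K | IsCalkinSpace K ∧ ∀ α ∈ I, ∀ β ∈ J, toC (tensorSeq α β) ∈ K}

/-- A Calkin space `𝔦` is stable if `𝔦⊗𝔦 = 𝔦`. -/
def IsStableCalkin (I : Set (ℕ → ℂ)) : Prop := IsCalkinSpace I ∧ calkinTensor I I = I

/-- The principal Calkin space `⟨α⟩` generated by `α`: the smallest Calkin space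
containing `α`. -/
def principalCalkin (α : ℕ → ℂ) : Set (ℕ → ℂ) := ⋂₀ {K | IsCalkinSpace K ∧ α ∈ K}

/-- `Kw ω α n = #{m : ω^{n+1} < α m ≤ ω^n}` (the sequence `α` being 0-indexed). -/
def Kw (ω : ℝ) (α : ℕ → ℝ) (n : ℕ) : ℕ :=
  Set.ncard {m : ℕ | ω ^ (n + 1) < α m ∧ α m ≤ ω ^ n}

/-- `K̃ₙ = Σ_{i=0}^n Kᵢ`. -/
def Ktil (ω : ℝ) (α : ℕ → ℝ) (n : ℕ) : ℕ := ∑ i ∈ Finset.range (n + 1), Kw ω α i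

/-- `Mₙ = Σ_{i+j=n} Kᵢ Kⱼ`. -/
def Mw (ω : ℝ) (α : ℕ → ℝ) (n : ℕ) : ℕ :=
  ∑ i ∈ Finset.range (n + 1), Kw ω α i * Kw ω α (n - i)

/-- `M̃ₙ = Σ_{i=0}^n Mᵢ`. -/
def Mtil (ω : ℝ) (α : ℕ → ℝ) (n : ℕ) : ℕ := ∑ i ∈ Finset.range (n + 1), Mw ω α i

/-- The `n`-th approximation number of `T` (1-indexed: `approxNum T n = aₙ(T)` is the
infimum of `‖T - F‖` over bounded operators `F` of rank `< n`).  For operators between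
Hilbert spaces this equals the `n`-th singular number. -/
def approxNum {X Y : Type*} [NormedAddCommGroup X] [NormedSpace ℂ X]
    [NormedAddCommGroup Y] [NormedSpace ℂ Y] (T : X →L[ℂ] Y) (n : ℕ) : ℝ :=
  sInf {c | ∃ F : X →L[ℂ] Y, LinearMap.rank (F : X →ₗ[ℂ] Y) < (n : Cardinal) ∧ c = ‖T - F‖}

/-- The `n`-th Kolmogorov number `dₙ(T)` (1-indexed). -/
def kolNum {X Y : Type*} [NormedAddCommGroup X] [NormedSpace ℂ X]
    [NormedAddCommGroup Y] [NormedSpace ℂ Y] (T : X →L[ℂ] Y) (n : ℕ) : ℝ :=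
  sInf {c | ∃ V : Submodule ℂ Y, Module.rank ℂ V < (n : Cardinal) ∧
    c = ⨆ x : {x : X // ‖x‖ ≤ 1}, ⨅ y : V, ‖T x.1 - (y : Y)‖}

/-- The `n`-th Hilbert number `hₙ(T)` (1-indexed): the supremum of `sₙ(A ∘ T ∘ B)` over
all Hilbert spaces `K`, `H'` and all contractions `B : K → X`, `A : Y → H'`. -/
def hilbertNum {X Y : Type u} [NormedAddCommGroup X] [NormedSpace ℂ X]
    [NormedAddCommGroup Y] [NormedSpace ℂ Y] (T : X →L[ℂ] Y) (n : ℕ) : ℝ :=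
  sSup {c | ∃ (K : Type u) (_ : NormedAddCommGroup K) (_ : InnerProductSpace ℂ K)
    (_ : CompleteSpace K) (H' : Type u) (_ : NormedAddCommGroup H')
    (_ : InnerProductSpace ℂ H') (_ : CompleteSpace H')
    (B : K →L[ℂ] X) (A : Y →L[ℂ] H'), ‖B‖ ≤ 1 ∧ ‖A‖ ≤ 1 ∧
    c = approxNum ((A.comp T).comp B) n}

/-- The sequence of singular numbers of an operator, 0-indexed:
`sSeq T n = s_{n+1}(T) = a_{n+1}(T)`. -/
def sSeq {X Y : Type*} [NormedAddCommGroup X] [NormedSpace ℂ X]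
    [NormedAddCommGroup Y] [NormedSpace ℂ Y] (T : X →L[ℂ] Y) : ℕ → ℝ :=
  fun n => approxNum T (n + 1)

/-- The multiplication operator `M_{a,b} : x ↦ a * x * b` on a normed algebra. -/
def Mop {A : Type*} [NonUnitalNormedRing A] [NormedSpace ℂ A] [IsScalarTower ℂ A A]
    [SMulCommClass ℂ A A] (a b : A) : A →L[ℂ] A :=
  (ContinuousLinearMap.mul ℂ A a).comp ((ContinuousLinearMap.mul ℂ A).flip b)

/-! ### Auxiliary machinery for Statement 9 -/

section Statement9Aux

universe v

namespace SNum9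

open ContinuousLinearMap

variable {W X Y Z : Type v} [NormedAddCommGroup X] [NormedSpace ℂ X]
  [NormedAddCommGroup Y] [NormedSpace ℂ Y]
  [NormedAddCommGroup Z] [NormedSpace ℂ Z]
  [NormedAddCommGroup W] [NormedSpace ℂ W]

lemma approxNum_bddBelow (T : X →L[ℂ] Y) (n : ℕ) :
    BddBelow {c | ∃ F : X →L[ℂ] Y, LinearMap.rank (F : X →ₗ[ℂ] Y) < (n : Cardinal) ∧
      c = ‖T - F‖} := by
  refine ⟨0, ?_⟩
  rintro c ⟨F, -, rfl⟩
  positivity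

lemma approxNum_nonneg (T : X →L[ℂ] Y) (n : ℕ) : 0 ≤ approxNum T n := by
  apply Real.sInf_nonneg
  rintro c ⟨F, -, rfl⟩
  positivity

lemma approxNum_set_nonempty (T : X →L[ℂ] Y) {n : ℕ} (hn : 1 ≤ n) :
    Set.Nonempty {c | ∃ F : X →L[ℂ] Y, LinearMap.rank (F : X →ₗ[ℂ] Y) < (n : Cardinal) ∧
      c = ‖T - F‖} := by
  refine ⟨‖T - 0‖, 0, ?_, rfl⟩
  rw [ContinuousLinearMap.coe_zero, LinearMap.rank_zero]
  calc (0 : Cardinal) < 1 := zero_lt_one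
  _ ≤ (n : Cardinal) := by exact_mod_cast hn

lemma approxNum_le (T F : X →L[ℂ] Y) {n : ℕ}
    (h : LinearMap.rank (F : X →ₗ[ℂ] Y) < (n : Cardinal)) :
    approxNum T n ≤ ‖T - F‖ :=
  csInf_le (approxNum_bddBelow T n) ⟨F, h, rfl⟩

lemma approxNum_le_approxNum_add (S R : X →L[ℂ] Y) {n : ℕ} (hn : 1 ≤ n) :
    approxNum S n ≤ approxNum R n + ‖S - R‖ := by
  have h : approxNum S n - ‖S - R‖ ≤ approxNum R n := by
    apply le_csInf (approxNum_set_nonempty R hn)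
    rintro c ⟨F, hF, rfl⟩
    have h1 : approxNum S n ≤ ‖S - F‖ := approxNum_le S F hF
    have h2 : ‖S - F‖ ≤ ‖S - R‖ + ‖R - F‖ := by
      have h3 : S - F = (S - R) + (R - F) := by abel
      rw [h3]; exact norm_add_le _ _
    linarith
  linarith

lemma rank_comp_lt {n : ℕ} (B : W →L[ℂ] X) (F : X →L[ℂ] Y) (A : Y →L[ℂ] Z)
    (h : LinearMap.rank (F : X →ₗ[ℂ] Y) < (n : Cardinal)) :
    LinearMap.rank (((A.comp F).comp B : W →L[ℂ] Z) : W →ₗ[ℂ] Z) < (n : Cardinal) := by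
  have h1 : LinearMap.rank (((A.comp F).comp B : W →L[ℂ] Z) : W →ₗ[ℂ] Z)
      ≤ LinearMap.rank ((A.comp F : X →L[ℂ] Z) : X →ₗ[ℂ] Z) := by
    rw [ContinuousLinearMap.toLinearMap_comp]
    exact LinearMap.rank_comp_le_left _ _
  have h2 : LinearMap.rank ((A.comp F : X →L[ℂ] Z) : X →ₗ[ℂ] Z)
      ≤ LinearMap.rank (F : X →ₗ[ℂ] Y) := by
    rw [ContinuousLinearMap.toLinearMap_comp]
    exact LinearMap.rank_comp_le_right _ _
  exact lt_of_le_of_lt (h1.trans h2) h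

lemma norm_comp_le_of_le_one (B : W →L[ℂ] X) (T : X →L[ℂ] Y) (A : Y →L[ℂ] Z)
    (hB : ‖B‖ ≤ 1) (hA : ‖A‖ ≤ 1) : ‖(A.comp T).comp B‖ ≤ ‖T‖ := by
  calc ‖(A.comp T).comp B‖ ≤ ‖A.comp T‖ * ‖B‖ := ContinuousLinearMap.opNorm_comp_le _ _
  _ ≤ ‖A.comp T‖ := mul_le_of_le_one_right (norm_nonneg _) hB
  _ ≤ ‖A‖ * ‖T‖ := ContinuousLinearMap.opNorm_comp_le _ _
  _ ≤ 1 * ‖T‖ := mul_le_mul_of_nonneg_right hA (norm_nonneg _)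
  _ = ‖T‖ := one_mul _

lemma approxNum_comp_le (B : W →L[ℂ] X) (T : X →L[ℂ] Y) (A : Y →L[ℂ] Z)
    (hB : ‖B‖ ≤ 1) (hA : ‖A‖ ≤ 1) {n : ℕ} (hn : 1 ≤ n) :
    approxNum ((A.comp T).comp B) n ≤ approxNum T n := by
  apply le_csInf (approxNum_set_nonempty T hn)
  rintro c ⟨F, hF, rfl⟩
  refine (approxNum_le _ ((A.comp F).comp B) (rank_comp_lt B F A hF)).trans ?_
  have h : (A.comp T).comp B - (A.comp F).comp B = (A.comp (T - F)).comp B := by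
    ext x; simp
  rw [h]
  exact norm_comp_le_of_le_one B (T - F) A hB hA

noncomputable instance : Inner ℂ PUnit := ⟨fun _ _ => 0⟩

noncomputable instance : InnerProductSpace ℂ PUnit where
  norm_sq_eq_re_inner x := by simp [Inner.inner]
  conj_inner_symm x y := by simp [Inner.inner]
  add_left x y z := by simp [Inner.inner]
  smul_left x y r := by simp [Inner.inner]

lemma hilbertNum_le {T : X →L[ℂ] Y} {n : ℕ} {C : ℝ} (hC : 0 ≤ C)
    (h : ∀ (K : Type v) (_ : NormedAddCommGroup K) (_ : InnerProductSpace ℂ K)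
      (_ : CompleteSpace K) (H' : Type v) (_ : NormedAddCommGroup H')
      (_ : InnerProductSpace ℂ H') (_ : CompleteSpace H')
      (B : K →L[ℂ] X) (A : Y →L[ℂ] H'), ‖B‖ ≤ 1 → ‖A‖ ≤ 1 →
      approxNum ((A.comp T).comp B) n ≤ C) :
    hilbertNum T n ≤ C := by
  unfold hilbertNum
  apply Real.sSup_le _ hC
  rintro c ⟨K, iK1, iK2, iK3, H', iH1, iH2, iH3, B, A, hB, hA, rfl⟩
  exact h K iK1 iK2 iK3 H' iH1 iH2 iH3 B A hB hA

lemma le_hilbertNum (T : X →L[ℂ] Y) {n : ℕ} (hn : 1 ≤ n)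
    (K : Type v) [NormedAddCommGroup K] [InnerProductSpace ℂ K] [CompleteSpace K]
    (H' : Type v) [NormedAddCommGroup H'] [InnerProductSpace ℂ H'] [CompleteSpace H']
    (B : K →L[ℂ] X) (A : Y →L[ℂ] H') (hB : ‖B‖ ≤ 1) (hA : ‖A‖ ≤ 1) :
    approxNum ((A.comp T).comp B) n ≤ hilbertNum T n := by
  unfold hilbertNum
  apply le_csSup
  · refine ⟨approxNum T n, ?_⟩
    rintro c ⟨K', iK1, iK2, iK3, H'', iH1, iH2, iH3, B', A', hB', hA', rfl⟩
    exact approxNum_comp_le B' T A' hB' hA' hn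
  · exact ⟨K, inferInstance, inferInstance, inferInstance, H', inferInstance, inferInstance,
      inferInstance, B, A, hB, hA, rfl⟩

lemma hilbertNum_le_approxNum (T : X →L[ℂ] Y) {n : ℕ} (hn : 1 ≤ n) :
    hilbertNum T n ≤ approxNum T n := by
  apply hilbertNum_le (approxNum_nonneg T n)
  intro K iK1 iK2 iK3 H' iH1 iH2 iH3 B A hB hA
  exact approxNum_comp_le B T A hB hA hn

lemma hilbertNum_nonneg (T : X →L[ℂ] Y) {n : ℕ} (hn : 1 ≤ n) :
    0 ≤ hilbertNum T n := by
  refine (approxNum_nonneg ((0 : Y →L[ℂ] PUnit.{v+1}).comp T |>.comp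
    (0 : PUnit.{v+1} →L[ℂ] X)) n).trans ?_
  exact le_hilbertNum T hn PUnit PUnit 0 0 (by simp) (by simp)

end SNum9

end Statement9Aux


section Statement9Key

universe v

namespace SNum9

open Unitization

set_option maxHeartbeats 2000000 in
lemma key_approx' {A : Type v} [NonUnitalCStarAlgebra A] (J : Submodule ℂ A)
    (hJl : ∀ a : A, ∀ x ∈ J, a * x ∈ J) (hJr : ∀ a : A, ∀ x ∈ J, x * a ∈ J)
    (a b : A) (ha : a ∈ J) (hb : b ∈ J) {ε : ℝ} (hε : 0 < ε) :
    ∃ e : A, e ∈ J ∧ ‖e‖ ≤ 1 ∧ ‖a - e * a‖ ≤ ε ∧ ‖a - a * e‖ ≤ ε ∧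
      ‖b - e * b‖ ≤ ε ∧ ‖b - b * e‖ ≤ ε := by
  obtain ⟨δ, hδdef⟩ : ∃ δ : ℝ, δ = ε ^ 2 := ⟨_, rfl⟩
  have hδ : (0:ℝ) < δ := by rw [hδdef]; positivity
  obtain ⟨m, hm_def⟩ : ∃ m : A, m = a * star a + star a * a + b * star b + star b * b :=
    ⟨_, rfl⟩
  have hm : m ∈ J := by
    rw [hm_def]
    exact add_mem (add_mem (add_mem (hJr (star a) a ha) (hJl (star a) a ha))
      (hJr (star b) b hb)) (hJl (star b) b hb)
  have hmsa : IsSelfAdjoint m := by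
    rw [IsSelfAdjoint, hm_def]
    simp only [star_add, star_mul, star_star]
    try abel
  have hminr : ((m : A) : Unitization ℂ A) =
      (a : Unitization ℂ A) * star (a : Unitization ℂ A)
      + star (a : Unitization ℂ A) * (a : Unitization ℂ A)
      + (b : Unitization ℂ A) * star (b : Unitization ℂ A)
      + star (b : Unitization ℂ A) * (b : Unitization ℂ A) := by
    rw [hm_def]
    simp [Unitization.inr_add, Unitization.inr_mul, Unitization.inr_star]
  have hm0 : (0 : Unitization ℂ A) ≤ (m : Unitization ℂ A) := by
    rw [hminr]
    exact add_nonneg (add_nonneg (add_nonneg (mul_star_self_nonneg _)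
      (star_mul_self_nonneg _)) (mul_star_self_nonneg _)) (star_mul_self_nonneg _)
  have hq : ∀ t ∈ quasispectrum ℝ m, (0:ℝ) ≤ t := by
    intro t ht
    rw [Unitization.quasispectrum_eq_spectrum_inr' ℝ ℂ] at ht
    exact spectrum_nonneg_of_nonneg hm0 ht
  obtain ⟨g, hg_def⟩ : ∃ g : ℝ → ℝ, g = fun t => t / (t + δ) := ⟨_, rfl⟩
  have hg0 : g 0 = 0 := by simp [hg_def]
  have hgc : ContinuousOn g (quasispectrum ℝ m) := by
    rw [hg_def]
    apply ContinuousOn.div continuousOn_id (continuousOn_id.add continuousOn_const)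
    intro t ht
    have h0 := hq t ht
    show t + δ ≠ 0
    exact ne_of_gt (by linarith)
  obtain ⟨e, he_def⟩ : ∃ e : A, e = cfcₙ g m := ⟨_, rfl⟩
  have hesa : IsSelfAdjoint e := he_def ▸ cfcₙ_predicate g m
  have he1 : ‖e‖ ≤ 1 := by
    rw [he_def]
    apply norm_cfcₙ_le
    intro t ht
    have h0 := hq t ht
    rw [hg_def, Real.norm_eq_abs, abs_of_nonneg (by positivity)]
    rw [div_le_one (by linarith)]
    linarith
  -- continuity facts
  have hc_id : ContinuousOn (fun t : ℝ => t) (quasispectrum ℝ m) := continuousOn_id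
  have hc_gid : ContinuousOn (fun t : ℝ => g t * t) (quasispectrum ℝ m) := hgc.mul hc_id
  have hc_idg : ContinuousOn (fun t : ℝ => t * g t) (quasispectrum ℝ m) := hc_id.mul hgc
  have hc_gidg : ContinuousOn (fun t : ℝ => g t * t * g t) (quasispectrum ℝ m) :=
    hc_gid.mul hgc
  have hid : cfcₙ (fun t : ℝ => t) m = m := cfcₙ_id' ℝ m
  have hem : cfcₙ (fun t : ℝ => g t * t) m = e * m := by
    have h := cfcₙ_mul g (fun t : ℝ => t) m hgc hg0 hc_id rfl
    rw [hid, ← he_def] at h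
    exact h
  have hme : cfcₙ (fun t : ℝ => t * g t) m = m * e := by
    have h := cfcₙ_mul (fun t : ℝ => t) g m hc_id rfl hgc hg0
    rw [hid, ← he_def] at h
    exact h
  have heme : cfcₙ (fun t : ℝ => g t * t * g t) m = e * m * e := by
    have h := cfcₙ_mul (fun t : ℝ => g t * t) g m hc_gid (by simp [hg0]) hgc hg0
    rw [hem, ← he_def] at h
    exact h
  -- membership of e in J
  have he_eq : e = δ⁻¹ • (m - e * m) := by
    have h1 : cfcₙ (fun t : ℝ => δ⁻¹ • (t - g t * t)) m = δ⁻¹ • (m - e * m) := by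
      have h := cfcₙ_smul δ⁻¹ (fun t : ℝ => t - g t * t) m (hc_id.sub hc_gid) (by simp [hg0])
      have h' := cfcₙ_sub (fun t : ℝ => t) (fun t : ℝ => g t * t) m hc_id rfl hc_gid
        (by simp [hg0])
      rw [h', hid, hem] at h
      exact h
    rw [← h1, he_def]
    apply cfcₙ_congr
    intro t ht
    have h0 := hq t ht
    have hne : t + δ ≠ 0 := by linarith
    simp only [hg_def, smul_eq_mul]
    field_simp
    ring
  have hmemE : e ∈ J := by
    rw [he_eq]
    have h1 : m - e * m ∈ J := sub_mem hm (hJl e m hm)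
    have h2 := (Submodule.restrictScalars ℝ J).smul_mem δ⁻¹
      ((Submodule.restrictScalars_mem ℝ J _).mpr h1)
    exact (Submodule.restrictScalars_mem ℝ J _).mp h2
  -- the central norm bound
  have hsum : cfcₙ (fun t : ℝ => t - g t * t - (t * g t - g t * t * g t)) m
      = m - e * m - (m * e - e * m * e) := by
    have h := cfcₙ_sub (fun t : ℝ => t - g t * t) (fun t : ℝ => t * g t - g t * t * g t) m
      (hc_id.sub hc_gid) (by simp [hg0]) (hc_idg.sub hc_gidg) (by simp [hg0])
    have h1 : cfcₙ (fun t : ℝ => t - g t * t) m = m - e * m := by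
      have h' := cfcₙ_sub (fun t : ℝ => t) (fun t : ℝ => g t * t) m hc_id rfl hc_gid
        (by simp [hg0])
      rw [hid, hem] at h'
      exact h'
    have h2 : cfcₙ (fun t : ℝ => t * g t - g t * t * g t) m = m * e - e * m * e := by
      have h' := cfcₙ_sub (fun t : ℝ => t * g t) (fun t : ℝ => g t * t * g t) m hc_idg
        (by simp [hg0]) hc_gidg (by simp [hg0])
      rw [hme, heme] at h'
      exact h'
    rw [h1, h2] at h
    exact h
  have hwnorm : ‖m - e * m - (m * e - e * m * e)‖ ≤ δ := by
    rw [← hsum]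
    apply norm_cfcₙ_le
    intro t ht
    have h0 := hq t ht
    have hpos : (0:ℝ) < t + δ := by linarith
    have hval : t - g t * t - (t * g t - g t * t * g t) = t * δ^2 / (t+δ)^2 := by
      simp only [hg_def]
      field_simp
      ring
    rw [Real.norm_eq_abs, hval, abs_of_nonneg (by positivity), div_le_iff₀ (by positivity)]
    nlinarith [mul_nonneg (mul_nonneg h0 h0) hδ.le, mul_nonneg (mul_nonneg h0 hδ.le) hδ.le,
      mul_pos (mul_pos hδ hδ) hδ]
  -- pass to the unitization
  obtain ⟨u, hu_def⟩ : ∃ u : Unitization ℂ A, u = 1 - (e : Unitization ℂ A) := ⟨_, rfl⟩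
  have husa : IsSelfAdjoint u := by
    rw [IsSelfAdjoint, hu_def, star_sub, star_one, ← Unitization.inr_star, hesa.star_eq]
  have hw_inr : u * (m : Unitization ℂ A) * u
      = ((m - e * m - (m * e - e * m * e) : A) : Unitization ℂ A) := by
    simp only [Unitization.inr_sub, Unitization.inr_mul, hu_def]
    noncomm_ring
  have core : ∀ v : Unitization ℂ A, 0 ≤ v → v ≤ (m : Unitization ℂ A) →
      ‖u * v * u‖ ≤ δ := by
    intro v h0 hvm
    have h1 : (0 : Unitization ℂ A) ≤ u * v * u := by
      have h2 := star_left_conjugate_nonneg h0 u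
      rwa [husa.star_eq] at h2
    have h2 : u * v * u ≤ u * (m : Unitization ℂ A) * u := by
      have h3 := star_left_conjugate_le_conjugate hvm u
      rwa [husa.star_eq] at h3
    calc ‖u * v * u‖ ≤ ‖u * (m : Unitization ℂ A) * u‖ :=
          CStarAlgebra.norm_le_norm_of_nonneg_of_le h1 h2
    _ = ‖m - e * m - (m * e - e * m * e)‖ := by rw [hw_inr, Unitization.norm_inr]
    _ ≤ δ := hwnorm
  -- two generic bounds
  have bound₁ : ∀ y : A, ∀ v : Unitization ℂ A, 0 ≤ v → v ≤ (m : Unitization ℂ A) →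
      ((y : Unitization ℂ A) * star (y : Unitization ℂ A) = u * v * u) → ‖y‖ ≤ ε := by
    intro y v h0 hvm heq
    have h2 : ‖y‖ * ‖y‖ ≤ δ := by
      calc ‖y‖ * ‖y‖ = ‖(y : Unitization ℂ A)‖ * ‖(y : Unitization ℂ A)‖ := by
            rw [Unitization.norm_inr]
      _ = ‖(y : Unitization ℂ A) * star (y : Unitization ℂ A)‖ :=
            (CStarRing.norm_self_mul_star).symm
      _ = ‖u * v * u‖ := by rw [heq]
      _ ≤ δ := core v h0 hvm
    rw [hδdef] at h2
    nlinarith [norm_nonneg y, hε, sq_nonneg (‖y‖ - ε)]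
  have bound₂ : ∀ y : A, ∀ v : Unitization ℂ A, 0 ≤ v → v ≤ (m : Unitization ℂ A) →
      (star (y : Unitization ℂ A) * (y : Unitization ℂ A) = u * v * u) → ‖y‖ ≤ ε := by
    intro y v h0 hvm heq
    have h2 : ‖y‖ * ‖y‖ ≤ δ := by
      calc ‖y‖ * ‖y‖ = ‖(y : Unitization ℂ A)‖ * ‖(y : Unitization ℂ A)‖ := by
            rw [Unitization.norm_inr]
      _ = ‖star (y : Unitization ℂ A) * (y : Unitization ℂ A)‖ :=
            (CStarRing.norm_star_mul_self).symm
      _ = ‖u * v * u‖ := by rw [heq]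
      _ ≤ δ := core v h0 hvm
    rw [hδdef] at h2
    nlinarith [norm_nonneg y, hε, sq_nonneg (‖y‖ - ε)]
  -- the four domination facts
  have dom₁ : (a : Unitization ℂ A) * star (a : Unitization ℂ A) ≤ (m : Unitization ℂ A) := by
    rw [hminr]
    have h := add_nonneg (add_nonneg (star_mul_self_nonneg (a : Unitization ℂ A))
      (mul_star_self_nonneg (b : Unitization ℂ A))) (star_mul_self_nonneg (b : Unitization ℂ A))
    calc (a : Unitization ℂ A) * star (a : Unitization ℂ A)
        ≤ (a : Unitization ℂ A) * star (a : Unitization ℂ A)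
          + (star (a : Unitization ℂ A) * (a : Unitization ℂ A)
            + (b : Unitization ℂ A) * star (b : Unitization ℂ A)
            + star (b : Unitization ℂ A) * (b : Unitization ℂ A)) := le_add_of_nonneg_right h
    _ = _ := by abel
  have dom₂ : star (a : Unitization ℂ A) * (a : Unitization ℂ A) ≤ (m : Unitization ℂ A) := by
    rw [hminr]
    have h := add_nonneg (add_nonneg (mul_star_self_nonneg (a : Unitization ℂ A))
      (mul_star_self_nonneg (b : Unitization ℂ A))) (star_mul_self_nonneg (b : Unitization ℂ A))
    calc star (a : Unitization ℂ A) * (a : Unitization ℂ A)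
        ≤ star (a : Unitization ℂ A) * (a : Unitization ℂ A)
          + ((a : Unitization ℂ A) * star (a : Unitization ℂ A)
            + (b : Unitization ℂ A) * star (b : Unitization ℂ A)
            + star (b : Unitization ℂ A) * (b : Unitization ℂ A)) := le_add_of_nonneg_right h
    _ = _ := by abel
  have dom₃ : (b : Unitization ℂ A) * star (b : Unitization ℂ A) ≤ (m : Unitization ℂ A) := by
    rw [hminr]
    have h := add_nonneg (add_nonneg (mul_star_self_nonneg (a : Unitization ℂ A))
      (star_mul_self_nonneg (a : Unitization ℂ A))) (star_mul_self_nonneg (b : Unitization ℂ A))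
    calc (b : Unitization ℂ A) * star (b : Unitization ℂ A)
        ≤ (b : Unitization ℂ A) * star (b : Unitization ℂ A)
          + ((a : Unitization ℂ A) * star (a : Unitization ℂ A)
            + star (a : Unitization ℂ A) * (a : Unitization ℂ A)
            + star (b : Unitization ℂ A) * (b : Unitization ℂ A)) := le_add_of_nonneg_right h
    _ = _ := by abel
  have dom₄ : star (b : Unitization ℂ A) * (b : Unitization ℂ A) ≤ (m : Unitization ℂ A) := by
    rw [hminr]
    have h := add_nonneg (add_nonneg (mul_star_self_nonneg (a : Unitization ℂ A))
      (star_mul_self_nonneg (a : Unitization ℂ A))) (mul_star_self_nonneg (b : Unitization ℂ A))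
    calc star (b : Unitization ℂ A) * (b : Unitization ℂ A)
        ≤ star (b : Unitization ℂ A) * (b : Unitization ℂ A)
          + ((a : Unitization ℂ A) * star (a : Unitization ℂ A)
            + star (a : Unitization ℂ A) * (a : Unitization ℂ A)
            + (b : Unitization ℂ A) * star (b : Unitization ℂ A)) := le_add_of_nonneg_right h
    _ = _ := by abel
  -- the four estimates
  have est₁ : ‖a - e * a‖ ≤ ε := by
    apply bound₁ (a - e * a) ((a : Unitization ℂ A) * star (a : Unitization ℂ A))
      (mul_star_self_nonneg _) dom₁
    have hy : ((a - e * a : A) : Unitization ℂ A) = u * (a : Unitization ℂ A) := by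
      simp only [Unitization.inr_sub, Unitization.inr_mul, hu_def]
      noncomm_ring
    rw [hy, star_mul, husa.star_eq]
    noncomm_ring
  have est₂ : ‖a - a * e‖ ≤ ε := by
    apply bound₂ (a - a * e) (star (a : Unitization ℂ A) * (a : Unitization ℂ A))
      (star_mul_self_nonneg _) dom₂
    have hy : ((a - a * e : A) : Unitization ℂ A) = (a : Unitization ℂ A) * u := by
      simp only [Unitization.inr_sub, Unitization.inr_mul, hu_def]
      noncomm_ring
    rw [hy, star_mul, husa.star_eq]
    noncomm_ring
  have est₃ : ‖b - e * b‖ ≤ ε := by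
    apply bound₁ (b - e * b) ((b : Unitization ℂ A) * star (b : Unitization ℂ A))
      (mul_star_self_nonneg _) dom₃
    have hy : ((b - e * b : A) : Unitization ℂ A) = u * (b : Unitization ℂ A) := by
      simp only [Unitization.inr_sub, Unitization.inr_mul, hu_def]
      noncomm_ring
    rw [hy, star_mul, husa.star_eq]
    noncomm_ring
  have est₄ : ‖b - b * e‖ ≤ ε := by
    apply bound₂ (b - b * e) (star (b : Unitization ℂ A) * (b : Unitization ℂ A))
      (star_mul_self_nonneg _) dom₄
    have hy : ((b - b * e : A) : Unitization ℂ A) = (b : Unitization ℂ A) * u := by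
      simp only [Unitization.inr_sub, Unitization.inr_mul, hu_def]
      noncomm_ring
    rw [hy, star_mul, husa.star_eq]
    noncomm_ring
  exact ⟨e, hmemE, he1, est₁, est₂, est₃, est₄⟩

lemma key_approx {A : Type v} [NonUnitalNormedRing A] [StarRing A] [CStarRing A]
    [NormedSpace ℂ A] [IsScalarTower ℂ A A] [SMulCommClass ℂ A A] [StarModule ℂ A]
    [CompleteSpace A] (J : Submodule ℂ A)
    (hJl : ∀ a : A, ∀ x ∈ J, a * x ∈ J) (hJr : ∀ a : A, ∀ x ∈ J, x * a ∈ J)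
    (a b : A) (ha : a ∈ J) (hb : b ∈ J) {ε : ℝ} (hε : 0 < ε) :
    ∃ e : A, e ∈ J ∧ ‖e‖ ≤ 1 ∧ ‖a - e * a‖ ≤ ε ∧ ‖a - a * e‖ ≤ ε ∧
      ‖b - e * b‖ ≤ ε ∧ ‖b - b * e‖ ≤ ε := by
  letI : NonUnitalCStarAlgebra A := ⟨⟩
  exact key_approx' J hJl hJr a b ha hb hε

end SNum9

end Statement9Key


section Statement9Op

universe v

namespace SNum9

noncomputable def sandwich {A : Type v} [NonUnitalNormedRing A] [NormedSpace ℂ A]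
    [IsScalarTower ℂ A A] [SMulCommClass ℂ A A] (J : Submodule ℂ A) (e f : A)
    (h : ∀ x : A, e * x * f ∈ J) : A →L[ℂ] J :=
  LinearMap.mkContinuous
    { toFun := fun x => ⟨e * x * f, h x⟩
      map_add' := fun x y => by
        apply Subtype.ext
        simp [mul_add, add_mul]
      map_smul' := fun c x => by
        apply Subtype.ext
        simp [mul_smul_comm, smul_mul_assoc] }
    (‖e‖ * ‖f‖)
    (fun x => by
      show ‖e * x * f‖ ≤ ‖e‖ * ‖f‖ * ‖x‖
      calc ‖e * x * f‖ ≤ ‖e * x‖ * ‖f‖ := norm_mul_le _ _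
      _ ≤ ‖e‖ * ‖x‖ * ‖f‖ := mul_le_mul_of_nonneg_right (norm_mul_le _ _) (norm_nonneg _)
      _ = ‖e‖ * ‖f‖ * ‖x‖ := by ring)

@[simp] lemma sandwich_apply {A : Type v} [NonUnitalNormedRing A] [NormedSpace ℂ A]
    [IsScalarTower ℂ A A] [SMulCommClass ℂ A A] (J : Submodule ℂ A) (e f : A)
    (h : ∀ x : A, e * x * f ∈ J) (x : A) :
    ((sandwich J e f h) x : A) = e * x * f := rfl

lemma norm_sandwich_le {A : Type v} [NonUnitalNormedRing A] [NormedSpace ℂ A]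
    [IsScalarTower ℂ A A] [SMulCommClass ℂ A A] (J : Submodule ℂ A) (e f : A)
    (h : ∀ x : A, e * x * f ∈ J) (he : ‖e‖ ≤ 1) (hf : ‖f‖ ≤ 1) :
    ‖sandwich J e f h‖ ≤ 1 := by
  refine (LinearMap.mkContinuous_norm_le _ (by positivity) _).trans ?_
  nlinarith [norm_nonneg e, norm_nonneg f]

lemma norm_subtypeL_le {A : Type v} [NormedAddCommGroup A] [NormedSpace ℂ A]
    (J : Submodule ℂ A) : ‖J.subtypeL‖ ≤ 1 :=
  ContinuousLinearMap.opNorm_le_bound _ zero_le_one (fun x => by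
    rw [one_mul, Submodule.subtypeL_apply]
    exact le_of_eq rfl)

end SNum9

end Statement9Op


set_option maxHeartbeats 4000000 in
/-- Let `𝒜` be a C*-algebra, `𝒥` a closed two-sided ideal of `𝒜` and
`a, b ∈ 𝒥`.  Then for every `n ≥ 1`:
`hₙ(M_{a,b}^𝒥) ≤ hₙ(M_{a,b}) ≤ aₙ(M_{a,b}) ≤ aₙ(M_{a,b}^𝒥)`. -/
theorem sNumbers_Mop_ideal {A : Type u} [NonUnitalNormedRing A] [StarRing A]
    [CStarRing A] [NormedSpace ℂ A] [IsScalarTower ℂ A A] [SMulCommClass ℂ A A]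
    [StarModule ℂ A] [CompleteSpace A]
    (J : Submodule ℂ A) (hJclosed : IsClosed (J : Set A))
    (hJl : ∀ a : A, ∀ x ∈ J, a * x ∈ J) (hJr : ∀ a : A, ∀ x ∈ J, x * a ∈ J)
    (a b : A) (ha : a ∈ J) (hb : b ∈ J)
    (T : J →L[ℂ] J) (hT : ∀ x : J, (T x : A) = a * (x : A) * b) :
    ∀ n : ℕ, 1 ≤ n →
      hilbertNum T n ≤ hilbertNum (Mop a b) n ∧
      hilbertNum (Mop a b) n ≤ approxNum (Mop a b) n ∧
      approxNum (Mop a b) n ≤ approxNum T n := by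
  intro n hn
  have hι : ‖J.subtypeL‖ ≤ 1 := SNum9.norm_subtypeL_le J
  have hMop : ∀ x : A, Mop a b x = a * (x * b) := fun x => rfl
  refine ⟨?_, SNum9.hilbertNum_le_approxNum (Mop a b) hn, ?_⟩
  · -- hₙ(T) ≤ hₙ(M_{a,b})
    apply SNum9.hilbertNum_le (SNum9.hilbertNum_nonneg (Mop a b) hn)
    intro K iK1 iK2 iK3 H' iH1 iH2 iH3 B A' hB hA'
    refine le_of_forall_pos_le_add fun ε hε => ?_
    obtain ⟨ε', hε'def⟩ : ∃ x : ℝ, x = ε / (‖a‖ + ‖b‖ + 1) := ⟨_, rfl⟩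
    have hε' : 0 < ε' := by rw [hε'def]; positivity
    obtain ⟨e, heJ, he1, h_ea, h_ae, h_eb, h_be⟩ :=
      SNum9.key_approx J hJl hJr a b ha hb hε'
    have hmemS : ∀ x : A, e * x * e ∈ J := fun x => hJr e _ (hJr x e heJ)
    set Se := SNum9.sandwich J e e hmemS with hSedef
    have hSe1 : ‖Se‖ ≤ 1 := SNum9.norm_sandwich_le J e e hmemS he1 he1
    set Bt : K →L[ℂ] A := J.subtypeL.comp B with hBtdef
    set At : A →L[ℂ] H' := A'.comp Se with hAtdef
    have hBt1 : ‖Bt‖ ≤ 1 := by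
      refine (ContinuousLinearMap.opNorm_comp_le _ _).trans ?_
      nlinarith [norm_nonneg B, norm_nonneg (J.subtypeL)]
    have hAt1 : ‖At‖ ≤ 1 := by
      refine (ContinuousLinearMap.opNorm_comp_le _ _).trans ?_
      nlinarith [norm_nonneg A', norm_nonneg Se]
    have hD : ‖(A'.comp T).comp B - (At.comp (Mop a b)).comp Bt‖ ≤ ε' * (‖a‖ + ‖b‖) := by
      apply ContinuousLinearMap.opNorm_le_bound _ (mul_nonneg hε'.le (by positivity))
      intro k
      have h1 : ((At.comp (Mop a b)).comp Bt) k = A' (Se (a * (((B k : J) : A) * b))) := rfl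
      have h2 : ((A'.comp T).comp B) k = A' (T (B k)) := rfl
      rw [ContinuousLinearMap.sub_apply, h1, h2, ← map_sub]
      refine (A'.le_opNorm _).trans ?_
      have h3 : ‖T (B k) - Se (a * (((B k : J) : A) * b))‖ ≤ ε' * (‖a‖ + ‖b‖) * ‖k‖ := by
        have h4 : ((T (B k) - Se (a * (((B k : J) : A) * b)) : J) : A)
            = a * ((B k : J) : A) * b - e * (a * (((B k : J) : A) * b)) * e := by
          rw [AddSubgroupClass.coe_sub, hT, SNum9.sandwich_apply]
        have h5 : ‖T (B k) - Se (a * (((B k : J) : A) * b))‖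
            = ‖a * ((B k : J) : A) * b - e * (a * (((B k : J) : A) * b)) * e‖ := by
          rw [← h4]; rfl
        rw [h5]
        obtain ⟨x, hx⟩ : ∃ x : A, x = ((B k : J) : A) := ⟨_, rfl⟩
        rw [← hx]
        have hdecomp : a * x * b - e * (a * (x * b)) * e
            = (a - e * a) * (x * b) + (e * a) * (x * (b - b * e)) := by noncomm_ring
        have hxk : ‖x‖ ≤ ‖k‖ := by
          rw [hx]
          have h6 : ‖((B k : J) : A)‖ = ‖B k‖ := rfl
          rw [h6]
          have h7 : ‖B k‖ ≤ ‖B‖ * ‖k‖ := B.le_opNorm k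
          nlinarith [norm_nonneg k]
        have t1 : ‖(a - e * a) * (x * b)‖ ≤ ε' * (‖x‖ * ‖b‖) :=
          (norm_mul_le _ _).trans
            (mul_le_mul h_ea (norm_mul_le _ _) (norm_nonneg _) hε'.le)
        have t2 : ‖(e * a) * (x * (b - b * e))‖ ≤ ‖a‖ * (‖x‖ * ε') := by
          refine (norm_mul_le _ _).trans ?_
          refine mul_le_mul ?_ ?_ (norm_nonneg _) (norm_nonneg a)
          · calc ‖e * a‖ ≤ ‖e‖ * ‖a‖ := norm_mul_le _ _
            _ ≤ 1 * ‖a‖ := mul_le_mul_of_nonneg_right he1 (norm_nonneg a)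
            _ = ‖a‖ := one_mul _
          · exact (norm_mul_le _ _).trans (mul_le_mul_of_nonneg_left h_be (norm_nonneg x))
        calc ‖a * x * b - e * (a * (x * b)) * e‖
            = ‖(a - e * a) * (x * b) + (e * a) * (x * (b - b * e))‖ := by rw [hdecomp]
        _ ≤ ‖(a - e * a) * (x * b)‖ + ‖(e * a) * (x * (b - b * e))‖ := norm_add_le _ _
        _ ≤ ε' * (‖x‖ * ‖b‖) + ‖a‖ * (‖x‖ * ε') := add_le_add t1 t2
        _ = ε' * (‖a‖ + ‖b‖) * ‖x‖ := by ring
        _ ≤ ε' * (‖a‖ + ‖b‖) * ‖k‖ := by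
            have hc : 0 ≤ ε' * (‖a‖ + ‖b‖) := mul_nonneg hε'.le (by positivity)
            exact mul_le_mul_of_nonneg_left hxk hc
      calc ‖A'‖ * ‖T (B k) - Se (a * (((B k : J) : A) * b))‖
          ≤ 1 * (ε' * (‖a‖ + ‖b‖) * ‖k‖) :=
            mul_le_mul hA' h3 (norm_nonneg _) zero_le_one
      _ = ε' * (‖a‖ + ‖b‖) * ‖k‖ := one_mul _
    have hle := SNum9.approxNum_le_approxNum_add ((A'.comp T).comp B)
      ((At.comp (Mop a b)).comp Bt) hn
    have hmem2 := SNum9.le_hilbertNum (Mop a b) hn K H' Bt At hBt1 hAt1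
    have hfinal : ε' * (‖a‖ + ‖b‖) ≤ ε := by
      rw [hε'def, div_mul_eq_mul_div, div_le_iff₀ (by positivity)]
      nlinarith [norm_nonneg a, norm_nonneg b]
    linarith
  · -- aₙ(M_{a,b}) ≤ aₙ(T)
    apply le_csInf (SNum9.approxNum_set_nonempty T hn)
    rintro c ⟨F, hF, rfl⟩
    refine le_of_forall_pos_le_add fun ε hε => ?_
    obtain ⟨ε', hε'def⟩ : ∃ x : ℝ, x = ε / (‖a‖ + ‖b‖ + 1) := ⟨_, rfl⟩
    have hε' : 0 < ε' := by rw [hε'def]; positivity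
    obtain ⟨e, heJ, he1, h_ea, h_ae, h_eb, h_be⟩ :=
      SNum9.key_approx J hJl hJr a b ha hb hε'
    have hmemS : ∀ x : A, e * x * e ∈ J := fun x => hJr e _ (hJr x e heJ)
    set Se := SNum9.sandwich J e e hmemS with hSedef
    have hSe1 : ‖Se‖ ≤ 1 := SNum9.norm_sandwich_le J e e hmemS he1 he1
    set G := (J.subtypeL.comp F).comp Se with hGdef
    have hrank := SNum9.rank_comp_lt Se F J.subtypeL hF
    refine (SNum9.approxNum_le (Mop a b) G hrank).trans ?_
    have hkey : ∀ x : A, ‖(Mop a b) x - ((J.subtypeL.comp T).comp Se) x‖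
        ≤ ε' * (‖a‖ + ‖b‖) * ‖x‖ := by
      intro x
      have h1 : ((J.subtypeL.comp T).comp Se) x = ((T (Se x) : J) : A) := rfl
      have h2 : ((T (Se x) : J) : A) = a * (e * x * e) * b := by
        rw [hT, SNum9.sandwich_apply]
      rw [h1, h2, hMop x]
      have hdecomp : a * (x * b) - a * (e * x * e) * b
          = (a - a * e) * (x * b) + (a * e) * (x * (b - e * b)) := by noncomm_ring
      have t1 : ‖(a - a * e) * (x * b)‖ ≤ ε' * (‖x‖ * ‖b‖) :=
        (norm_mul_le _ _).trans
          (mul_le_mul h_ae (norm_mul_le _ _) (norm_nonneg _) hε'.le)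
      have t2 : ‖(a * e) * (x * (b - e * b))‖ ≤ ‖a‖ * (‖x‖ * ε') := by
        refine (norm_mul_le _ _).trans ?_
        refine mul_le_mul ?_ ?_ (norm_nonneg _) (norm_nonneg a)
        · calc ‖a * e‖ ≤ ‖a‖ * ‖e‖ := norm_mul_le _ _
          _ ≤ ‖a‖ * 1 := mul_le_mul_of_nonneg_left he1 (norm_nonneg a)
          _ = ‖a‖ := mul_one _
        · exact (norm_mul_le _ _).trans (mul_le_mul_of_nonneg_left h_eb (norm_nonneg x))
      calc ‖a * (x * b) - a * (e * x * e) * b‖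
          = ‖(a - a * e) * (x * b) + (a * e) * (x * (b - e * b))‖ := by rw [hdecomp]
      _ ≤ ‖(a - a * e) * (x * b)‖ + ‖(a * e) * (x * (b - e * b))‖ := norm_add_le _ _
      _ ≤ ε' * (‖x‖ * ‖b‖) + ‖a‖ * (‖x‖ * ε') := add_le_add t1 t2
      _ = ε' * (‖a‖ + ‖b‖) * ‖x‖ := by ring
    have hcompnorm : ‖Mop a b - (J.subtypeL.comp T).comp Se‖ ≤ ε' * (‖a‖ + ‖b‖) := by
      apply ContinuousLinearMap.opNorm_le_bound _ (mul_nonneg hε'.le (by positivity))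
      intro x
      rw [ContinuousLinearMap.sub_apply]
      exact hkey x
    have hsplit : Mop a b - G
        = (Mop a b - (J.subtypeL.comp T).comp Se) + (J.subtypeL.comp (T - F)).comp Se := by
      ext x
      simp only [ContinuousLinearMap.sub_apply, ContinuousLinearMap.add_apply,
        ContinuousLinearMap.comp_apply, Submodule.subtypeL_apply, map_sub,
        AddSubgroupClass.coe_sub, hGdef]
      abel
    have hfinal : ε' * (‖a‖ + ‖b‖) ≤ ε := by
      rw [hε'def, div_mul_eq_mul_div, div_le_iff₀ (by positivity)]
      nlinarith [norm_nonneg a, norm_nonneg b]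
    calc ‖Mop a b - G‖
        = ‖(Mop a b - (J.subtypeL.comp T).comp Se) + (J.subtypeL.comp (T - F)).comp Se‖ := by
          rw [hsplit]
    _ ≤ ‖Mop a b - (J.subtypeL.comp T).comp Se‖ + ‖(J.subtypeL.comp (T - F)).comp Se‖ :=
          norm_add_le _ _
    _ ≤ ε' * (‖a‖ + ‖b‖) + ‖T - F‖ :=
          add_le_add hcompnorm (SNum9.norm_comp_le_of_le_one Se (T - F) J.subtypeL hSe1 hι)
    _ ≤ ‖T - F‖ + ε := by linarith
end
end

section
/- Let H be a Hilbert space, 𝒜 a C*-subalgebra of B(H) containing K(H), let A₁,…,Aₘ, B₁,…,Bₘ ∈ 𝒜 and Φ = Σ_{i=1}^m M_{A_i,B_i} : 𝒜 → 𝒜. If B₁,…,Bₘ are linearly independent, then there exist a positive integer r and a constant C > 0 such that for every n ≥ 1 and every i = 1,…,m one has a_{rn−r+1}(A_i) ≤ C · hₙ(Φ). In particular, if 𝔦 is a Calkin space and (hₙ(Φ))_{n≥1} ∈ 𝔦, then (aₙ(A_i))_{n≥1} ∈ 𝔦 for every i = 1,…,m. -/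
open scoped BigOperators

noncomputable section

section ApproxLemmas

variable {X Y : Type*} [NormedAddCommGroup X] [NormedSpace ℂ X]
    [NormedAddCommGroup Y] [NormedSpace ℂ Y]

lemma approxNum_nonneg (T : X →L[ℂ] Y) (n : ℕ) : 0 ≤ approxNum T n := by
  apply Real.sInf_nonneg
  rintro x ⟨F, -, rfl⟩
  positivity

lemma approxNum_le_of_rank_lt (T : X →L[ℂ] Y) {n : ℕ} (F : X →L[ℂ] Y)
    (hF : LinearMap.rank (F : X →ₗ[ℂ] Y) < (n : Cardinal)) : approxNum T n ≤ ‖T - F‖ := by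
  apply csInf_le
  · exact ⟨0, by rintro x ⟨G, -, rfl⟩; positivity⟩
  · exact ⟨F, hF, rfl⟩

lemma rank_zero_clm : LinearMap.rank ((0 : X →L[ℂ] Y) : X →ₗ[ℂ] Y) = 0 := by
  rw [ContinuousLinearMap.coe_zero]; exact LinearMap.rank_zero

lemma rank_zero_lt {n : ℕ} (hn : 1 ≤ n) :
    LinearMap.rank ((0 : X →L[ℂ] Y) : X →ₗ[ℂ] Y) < (n : Cardinal) := by
  rw [rank_zero_clm]
  exact_mod_cast Nat.lt_of_lt_of_le Nat.zero_lt_one hn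

lemma approxNum_le_norm (T : X →L[ℂ] Y) {n : ℕ} (hn : 1 ≤ n) : approxNum T n ≤ ‖T‖ := by
  have := approxNum_le_of_rank_lt T (0 : X →L[ℂ] Y) (rank_zero_lt hn)
  simpa using this

lemma approxNum_antitone (T : X →L[ℂ] Y) {m n : ℕ} (hm : 1 ≤ m) (hmn : m ≤ n) :
    approxNum T n ≤ approxNum T m := by
  apply csInf_le_csInf
  · exact ⟨0, by rintro x ⟨G, -, rfl⟩; positivity⟩
  · exact ⟨‖T‖, 0, rank_zero_lt hm, by simp⟩
  · rintro x ⟨F, hF, rfl⟩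
    exact ⟨F, lt_of_lt_of_le hF (by exact_mod_cast hmn), rfl⟩

lemma approxNum_exists (T : X →L[ℂ] Y) {n : ℕ} (hn : 1 ≤ n) {ε : ℝ} (hε : 0 < ε) :
    ∃ F : X →L[ℂ] Y, LinearMap.rank (F : X →ₗ[ℂ] Y) < (n : Cardinal) ∧
      ‖T - F‖ < approxNum T n + ε := by
  have hne : {c | ∃ F : X →L[ℂ] Y, LinearMap.rank (F : X →ₗ[ℂ] Y) < (n : Cardinal) ∧
      c = ‖T - F‖}.Nonempty := ⟨‖T‖, 0, rank_zero_lt hn, by simp⟩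
  have : approxNum T n < approxNum T n + ε := by linarith
  obtain ⟨c, ⟨F, hF, rfl⟩, hc⟩ := exists_lt_of_csInf_lt hne this
  exact ⟨F, hF, hc⟩

lemma le_of_forall_pos_le_add' {a b K : ℝ} (hK : 0 ≤ K)
    (h : ∀ ε : ℝ, 0 < ε → a ≤ b + K * ε) : a ≤ b := by
  apply le_of_forall_pos_le_add
  intro ε hε
  have := h (ε / (K + 1)) (by positivity)
  have h2 : K * (ε / (K + 1)) ≤ ε := by
    rw [div_eq_inv_mul, ← mul_assoc]
    have h3 : K * (K + 1)⁻¹ ≤ 1 := by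
      rw [mul_inv_le_iff₀ (by linarith)]; linarith
    nlinarith
  linarith

lemma rank_smul_le (c : ℂ) (F : X →ₗ[ℂ] Y) :
    LinearMap.rank (c • F) ≤ LinearMap.rank F := by
  rcases eq_or_ne c 0 with rfl | hc
  · rw [zero_smul]
    simpa [LinearMap.rank_zero] using zero_le _
  · rw [LinearMap.rank, LinearMap.range_smul _ _ hc]

lemma approxNum_sum_smul_le {ι : Type*} (s : Finset ι) (hs : s.Nonempty)
    (c : ι → ℂ) (S : ι → X →L[ℂ] Y) {n : ℕ} (hn : 1 ≤ n) :
    approxNum (∑ t ∈ s, c t • S t) (s.card * n - s.card + 1) ≤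
      ∑ t ∈ s, ‖c t‖ * approxNum (S t) n := by
  apply le_of_forall_pos_le_add' (K := ∑ t ∈ s, ‖c t‖) (by positivity)
  intro ε hε
  choose F hFrank hFnorm using fun t => approxNum_exists (S t) hn hε
  have hrank : LinearMap.rank ((∑ t ∈ s, c t • F t : X →L[ℂ] Y) : X →ₗ[ℂ] Y) <
      ((s.card * n - s.card + 1 : ℕ) : Cardinal) := by
    have hcoe : ((∑ t ∈ s, c t • F t : X →L[ℂ] Y) : X →ₗ[ℂ] Y)
        = ∑ t ∈ s, (c t • (F t : X →ₗ[ℂ] Y)) := by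
      push_cast
      rfl
    rw [hcoe]
    refine lt_of_le_of_lt (LinearMap.rank_finset_sum_le s _) ?_
    refine lt_of_le_of_lt (Finset.sum_le_sum (f := fun t => LinearMap.rank (c t • (F t : X →ₗ[ℂ] Y)))
      (g := fun _ => ((n - 1 : ℕ) : Cardinal)) ?_) ?_
    · intro t ht
      refine le_trans (rank_smul_le _ _) ?_
      obtain ⟨k, hk, hkn⟩ : ∃ k : ℕ, LinearMap.rank (F t : X →ₗ[ℂ] Y) = k ∧ k < n := by
        have hfin : LinearMap.rank (F t : X →ₗ[ℂ] Y) < Cardinal.aleph0 :=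
          lt_of_lt_of_le (hFrank t) (Cardinal.nat_lt_aleph0 n).le
        obtain ⟨k, hk⟩ := Cardinal.lt_aleph0.mp hfin
        exact ⟨k, hk, by have := hFrank t; rwa [hk, Nat.cast_lt] at this⟩
      rw [hk]
      show (k : Cardinal) ≤ ((n - 1 : ℕ) : Cardinal)
      exact Nat.cast_le.mpr (Nat.le_sub_one_of_lt hkn)
    · rw [Finset.sum_const, nsmul_eq_mul]
      have h1 : 1 ≤ s.card := Finset.card_pos.mpr hs
      have h2 : s.card * (n - 1) < s.card * n - s.card + 1 := by
        obtain ⟨k, rfl⟩ : ∃ k, n = k + 1 := ⟨n - 1, by omega⟩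
        rw [Nat.mul_succ, Nat.add_sub_cancel, Nat.add_sub_cancel]
        exact Nat.lt_succ_self _
      exact_mod_cast h2
  calc approxNum (∑ t ∈ s, c t • S t) (s.card * n - s.card + 1)
      ≤ ‖(∑ t ∈ s, c t • S t) - (∑ t ∈ s, c t • F t)‖ :=
        approxNum_le_of_rank_lt _ _ hrank
    _ = ‖∑ t ∈ s, c t • (S t - F t)‖ := by
        congr 1
        rw [← Finset.sum_sub_distrib]
        exact Finset.sum_congr rfl fun t _ => by rw [smul_sub]
    _ ≤ ∑ t ∈ s, ‖c t • (S t - F t)‖ := norm_sum_le _ _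
    _ ≤ ∑ t ∈ s, ‖c t‖ * (approxNum (S t) n + ε) := by
        apply Finset.sum_le_sum
        intro t ht
        calc ‖c t • (S t - F t)‖ ≤ ‖c t‖ * ‖S t - F t‖ :=
            ContinuousLinearMap.opNorm_smul_le _ _
          _ ≤ ‖c t‖ * (approxNum (S t) n + ε) :=
            mul_le_mul_of_nonneg_left (hFnorm t).le (norm_nonneg _)
    _ = (∑ t ∈ s, ‖c t‖ * approxNum (S t) n) + (∑ t ∈ s, ‖c t‖) * ε := by
        rw [Finset.sum_mul, ← Finset.sum_add_distrib]
        congr 1; funext t; ring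

lemma approxNum_smul_le (c : ℂ) (T : X →L[ℂ] Y) {n : ℕ} (hn : 1 ≤ n) :
    approxNum (c • T) n ≤ ‖c‖ * approxNum T n := by
  apply le_of_forall_pos_le_add' (K := ‖c‖) (norm_nonneg _)
  intro ε hε
  obtain ⟨F, hF, hFn⟩ := approxNum_exists T hn hε
  have hrank : LinearMap.rank ((c • F : X →L[ℂ] Y) : X →ₗ[ℂ] Y) < (n : Cardinal) := by
    have : ((c • F : X →L[ℂ] Y) : X →ₗ[ℂ] Y) = c • (F : X →ₗ[ℂ] Y) := rfl
    rw [this]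
    exact lt_of_le_of_lt (rank_smul_le _ _) hF
  calc approxNum (c • T) n ≤ ‖c • T - c • F‖ := approxNum_le_of_rank_lt _ _ hrank
    _ = ‖c • (T - F)‖ := by rw [smul_sub]
    _ ≤ ‖c‖ * ‖T - F‖ := ContinuousLinearMap.opNorm_smul_le _ _
    _ ≤ ‖c‖ * (approxNum T n + ε) := mul_le_mul_of_nonneg_left hFn.le (norm_nonneg _)
    _ = ‖c‖ * approxNum T n + ‖c‖ * ε := by ring

end ApproxLemmas
section HilbertLemmas

universe v

variable {X Y : Type v} [NormedAddCommGroup X] [NormedSpace ℂ X]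
    [NormedAddCommGroup Y] [NormedSpace ℂ Y]

lemma hilbertNum_nonneg (T : X →L[ℂ] Y) (n : ℕ) : 0 ≤ hilbertNum T n := by
  apply Real.sSup_nonneg
  rintro x ⟨K, _, _, _, H', _, _, _, B, A, hB, hA, rfl⟩
  exact approxNum_nonneg _ _

lemma hilbertNum_bddAbove (T : X →L[ℂ] Y) {n : ℕ} (hn : 1 ≤ n) :
    ∀ c ∈ {c | ∃ (K : Type v) (_ : NormedAddCommGroup K) (_ : InnerProductSpace ℂ K)
    (_ : CompleteSpace K) (H' : Type v) (_ : NormedAddCommGroup H')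
    (_ : InnerProductSpace ℂ H') (_ : CompleteSpace H')
    (B : K →L[ℂ] X) (A : Y →L[ℂ] H'), ‖B‖ ≤ 1 ∧ ‖A‖ ≤ 1 ∧
    c = approxNum ((A.comp T).comp B) n}, c ≤ ‖T‖ := by
  rintro c ⟨K, _, _, _, H', _, _, _, B, A, hB, hA, rfl⟩
  refine le_trans (approxNum_le_norm _ hn) ?_
  calc ‖(A.comp T).comp B‖ ≤ ‖A.comp T‖ * ‖B‖ := ContinuousLinearMap.opNorm_comp_le _ _
    _ ≤ (‖A‖ * ‖T‖) * ‖B‖ :=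
      mul_le_mul_of_nonneg_right (ContinuousLinearMap.opNorm_comp_le _ _) (norm_nonneg _)
    _ ≤ (1 * ‖T‖) * 1 := by
      apply mul_le_mul (mul_le_mul_of_nonneg_right hA (norm_nonneg _)) hB (norm_nonneg _)
      positivity
    _ = ‖T‖ := by ring

set_option maxHeartbeats 1000000 in
lemma le_hilbertNum (T : X →L[ℂ] Y) {n : ℕ} (hn : 1 ≤ n)
    (K : Type v) [i1 : NormedAddCommGroup K] [i2 : InnerProductSpace ℂ K] [i3 : CompleteSpace K]
    (H' : Type v) [i4 : NormedAddCommGroup H'] [i5 : InnerProductSpace ℂ H']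
    [i6 : CompleteSpace H']
    (B : K →L[ℂ] X) (A : Y →L[ℂ] H') (hB : ‖B‖ ≤ 1) (hA : ‖A‖ ≤ 1) :
    approxNum ((A.comp T).comp B) n ≤ hilbertNum T n := by
  have hmem : approxNum ((A.comp T).comp B) n ∈ {c | ∃ (K : Type v) (_ : NormedAddCommGroup K)
      (_ : InnerProductSpace ℂ K) (_ : CompleteSpace K) (H' : Type v)
      (_ : NormedAddCommGroup H') (_ : InnerProductSpace ℂ H') (_ : CompleteSpace H')
      (B : K →L[ℂ] X) (A : Y →L[ℂ] H'), ‖B‖ ≤ 1 ∧ ‖A‖ ≤ 1 ∧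
      c = approxNum ((A.comp T).comp B) n} :=
    ⟨K, i1, i2, i3, H', i4, i5, i6, B, A, hB, hA, rfl⟩
  exact le_csSup ⟨‖T‖, hilbertNum_bddAbove T hn⟩ hmem

lemma hilbertNum_antitone (T : X →L[ℂ] Y) {m n : ℕ} (hm : 1 ≤ m) (hmn : m ≤ n) :
    hilbertNum T n ≤ hilbertNum T m := by
  apply Real.sSup_le
  · rintro c ⟨K, _, _, _, H', _, _, _, B, A, hB, hA, rfl⟩
    refine le_trans (approxNum_antitone _ hm hmn) ?_
    exact le_hilbertNum T hm K H' B A hB hA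
  · exact hilbertNum_nonneg T m

end HilbertLemmas
section RearrLemmas

lemma sum_finset_le_sum_range {f : ℕ → ℝ} (hf : ∀ k, 0 ≤ f k)
    (hmono : ∀ {i j : ℕ}, i ≤ j → f j ≤ f i) :
    ∀ (n : ℕ) (F : Finset ℕ), F.card = n → ∑ i ∈ F, f i ≤ ∑ k ∈ Finset.range n, f k := by
  intro n
  induction n with
  | zero => intro F hF; rw [Finset.card_eq_zero.mp hF]; simp
  | succ n ih =>
    intro F hF
    have hne : F.Nonempty := Finset.card_pos.mp (by omega)
    have hMF : F.max' hne ∈ F := F.max'_mem hne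
    have hcard : (F.erase (F.max' hne)).card = n := by
      rw [Finset.card_erase_of_mem hMF]; omega
    have hnM : n ≤ F.max' hne := by
      have hsub : F ⊆ Finset.range (F.max' hne + 1) := fun x hx =>
        Finset.mem_range.mpr (Nat.lt_succ_of_le (F.le_max' x hx))
      have := Finset.card_le_card hsub
      rw [hF, Finset.card_range] at this; omega
    calc ∑ i ∈ F, f i = ∑ i ∈ F.erase (F.max' hne), f i + f (F.max' hne) :=
          (Finset.sum_erase_add F f hMF).symm
      _ ≤ ∑ k ∈ Finset.range n, f k + f n := add_le_add (ih _ hcard) (hmono hnM)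
      _ = ∑ k ∈ Finset.range (n + 1), f k := (Finset.sum_range_succ f n).symm

lemma norm_toC {f : ℕ → ℝ} (hf : ∀ k, 0 ≤ f k) (k : ℕ) : ‖toC f k‖ = f k := by
  simp [toC, Complex.norm_real, abs_of_nonneg (hf k)]

lemma rearrSum_nonneg (α : ℕ → ℂ) (n : ℕ) : 0 ≤ rearrSum α n := by
  apply Real.sSup_nonneg
  rintro x ⟨F, hF, rfl⟩
  positivity

lemma rearrSum_toC_antitone {f : ℕ → ℝ} (hf : ∀ k, 0 ≤ f k)
    (hmono : ∀ {i j : ℕ}, i ≤ j → f j ≤ f i) (n : ℕ) :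
    rearrSum (toC f) n = ∑ k ∈ Finset.range n, f k := by
  apply le_antisymm
  · apply Real.sSup_le
    · rintro x ⟨F, hF, rfl⟩
      simp only [Set.mem_setOf_eq] at hF
      calc ∑ i ∈ F, ‖toC f i‖ = ∑ i ∈ F, f i := Finset.sum_congr rfl fun i _ => norm_toC hf i
        _ ≤ ∑ k ∈ Finset.range n, f k := sum_finset_le_sum_range hf @hmono n F hF
    · exact Finset.sum_nonneg fun k _ => hf k
  · apply le_csSup
    · refine ⟨∑ k ∈ Finset.range n, f k, ?_⟩
      rintro x ⟨F, hF, rfl⟩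
      simp only [Set.mem_setOf_eq] at hF
      calc ∑ i ∈ F, ‖toC f i‖ = ∑ i ∈ F, f i := Finset.sum_congr rfl fun i _ => norm_toC hf i
        _ ≤ ∑ k ∈ Finset.range n, f k := sum_finset_le_sum_range hf @hmono n F hF
    · exact ⟨Finset.range n, by simp,
        (Finset.sum_congr rfl fun i _ => norm_toC hf i)⟩

lemma rearr_toC_antitone {f : ℕ → ℝ} (hf : ∀ k, 0 ≤ f k)
    (hmono : ∀ {i j : ℕ}, i ≤ j → f j ≤ f i) (n : ℕ) :
    rearr (toC f) n = f n := by
  rw [rearr, rearrSum_toC_antitone hf @hmono, rearrSum_toC_antitone hf @hmono,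
    Finset.sum_range_succ]
  ring

end RearrLemmas
section IndicatorLemma

lemma rearr_indicator_le {h : ℕ → ℝ} (hh : ∀ k, 0 ≤ h k)
    (hmono : ∀ {i j : ℕ}, i ≤ j → h j ≤ h i) {C : ℝ} (hC : 0 ≤ C)
    {r j : ℕ} (hj : j < r) (n : ℕ) :
    rearr (fun k => if k % r = j then ((C * h (k / r) : ℝ) : ℂ) else 0) n ≤ C * h n := by
  set γ : ℕ → ℂ := fun k => if k % r = j then ((C * h (k / r) : ℝ) : ℂ) else 0 with hγ
  have hnorm : ∀ i, ‖γ i‖ ≤ C * h 0 := by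
    intro i
    by_cases hi : i % r = j
    · simp only [hγ, if_pos hi]
      rw [Complex.norm_real, Real.norm_of_nonneg (mul_nonneg hC (hh _))]
      exact mul_le_mul_of_nonneg_left (hmono (Nat.zero_le _)) hC
    · simp only [hγ, if_neg hi, norm_zero]
      exact mul_nonneg hC (hh _)
  have hbdd : ∀ m : ℕ, ∀ x ∈ ((fun F : Finset ℕ => ∑ i ∈ F, ‖γ i‖) ''
      {F | F.card = m}), x ≤ (m : ℝ) * (C * h 0) := by
    rintro m x ⟨F, hF, rfl⟩
    simp only [Set.mem_setOf_eq] at hF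
    calc ∑ i ∈ F, ‖γ i‖ ≤ F.card • (C * h 0) :=
          Finset.sum_le_card_nsmul F _ _ fun i _ => hnorm i
      _ = (m : ℝ) * (C * h 0) := by rw [hF, nsmul_eq_mul]
  have key : rearrSum γ (n + 1) ≤ rearrSum γ n + C * h n := by
    apply Real.sSup_le
    · rintro x ⟨F, hF, rfl⟩
      simp only [Set.mem_setOf_eq] at hF
      have hex : ∃ x ∈ F, ‖γ x‖ ≤ C * h n := by
        by_contra hcon
        push_neg at hcon
        have hfacts : ∀ x ∈ F, x % r = j ∧ x / r < n := by
          intro x hx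
          have h1 : C * h n < ‖γ x‖ := hcon x hx
          have h2 : x % r = j := by
            by_contra h2
            simp only [hγ, if_neg h2, norm_zero] at h1
            have : 0 ≤ C * h n := mul_nonneg hC (hh _)
            linarith
          have h3 : ‖γ x‖ = C * h (x / r) := by
            simp only [hγ, if_pos h2]
            rw [Complex.norm_real, Real.norm_of_nonneg (mul_nonneg hC (hh _))]
          rw [h3] at h1
          have hCpos : 0 < C := by
            rcases hC.lt_or_eq with h | h
            · exact h
            · exfalso; rw [← h] at h1; simp at h1
          have h4 : h n < h (x / r) := by
            exact lt_of_mul_lt_mul_left h1 hC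
          have h5 : x / r < n := by
            by_contra h5
            push_neg at h5
            exact absurd (hmono h5) (not_le.mpr h4)
          exact ⟨h2, h5⟩
        have hinj : Set.InjOn (fun x => x / r) F := by
          intro x hx y hy hxy
          have hx' := hfacts x hx
          have hy' := hfacts y hy
          have : r * (x / r) + x % r = r * (y / r) + y % r := by
            simp only at hxy
            rw [hxy, hx'.1, hy'.1]
          rwa [Nat.div_add_mod, Nat.div_add_mod] at this
        have hmaps : ∀ x ∈ F, x / r ∈ Finset.range n := fun x hx =>
          Finset.mem_range.mpr (hfacts x hx).2
        have := Finset.card_le_card_of_injOn _ hmaps hinj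
        rw [hF, Finset.card_range] at this
        omega
      obtain ⟨x, hxF, hx⟩ := hex
      calc ∑ i ∈ F, ‖γ i‖ = ∑ i ∈ F.erase x, ‖γ i‖ + ‖γ x‖ :=
            (Finset.sum_erase_add F _ hxF).symm
        _ ≤ rearrSum γ n + C * h n := by
            apply add_le_add _ hx
            apply le_csSup ⟨(n : ℝ) * (C * h 0), hbdd n⟩
            exact ⟨F.erase x, by rw [Set.mem_setOf_eq, Finset.card_erase_of_mem hxF, hF]; rfl, rfl⟩
    · have h1 : 0 ≤ rearrSum γ n := rearrSum_nonneg γ n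
      have h2 : 0 ≤ C * h n := mul_nonneg hC (hh _)
      linarith
  rw [rearr]
  linarith

end IndicatorLemma
section OpLemmas

variable {H : Type u} [NormedAddCommGroup H] [InnerProductSpace ℂ H] [CompleteSpace H]

lemma rankone_compact (f ξ : H) :
    IsCompactOperator ⇑((ContinuousLinearMap.smulRightL ℂ H H) (innerSL ℂ f) ξ) := by
  refine ⟨(fun c : ℂ => c • ξ) '' Metric.closedBall 0 ‖f‖, ?_, ?_⟩
  · exact (isCompact_closedBall 0 ‖f‖).image (continuous_id.smul continuous_const)
  · refine Filter.mem_of_superset (Metric.closedBall_mem_nhds 0 one_pos) ?_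
    intro x hx
    refine ⟨inner ℂ f x, ?_, rfl⟩
    rw [Metric.mem_closedBall, dist_zero_right]
    calc ‖(inner ℂ f x : ℂ)‖ ≤ ‖f‖ * ‖x‖ := norm_inner_le_norm f x
      _ ≤ ‖f‖ * 1 := by
        apply mul_le_mul_of_nonneg_left _ (norm_nonneg f)
        simpa [dist_zero_right] using hx
      _ = ‖f‖ := mul_one _

variable (𝒜 : Submodule ℂ (H →L[ℂ] H))

lemma elementary_bound
    (h𝒜K : ∀ T : H →L[ℂ] H, IsCompactOperator ⇑T → T ∈ 𝒜)
    (m : ℕ) (A B : Fin m → H →L[ℂ] H)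
    (Φ : 𝒜 →L[ℂ] 𝒜)
    (hΦ : ∀ X : 𝒜, (Φ X : H →L[ℂ] H) = ∑ i, A i * (X : H →L[ℂ] H) * B i)
    (f g : H) {n : ℕ} (hn : 1 ≤ n) :
    approxNum (∑ i, ((inner ℂ f ((B i) g) : ℂ)) • A i) n ≤
      ((1 + ‖f‖) * (1 + ‖g‖)) * hilbertNum Φ n := by
  -- the rank one embedding
  set Bc : H →L[ℂ] ↥𝒜 :=
    ContinuousLinearMap.codRestrict
      ((ContinuousLinearMap.smulRightL ℂ H H) (innerSL ℂ f)) 𝒜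
      (fun ξ => h𝒜K _ (rankone_compact f ξ)) with hBc
  have hBcnorm : ‖Bc‖ ≤ ‖f‖ := by
    apply ContinuousLinearMap.opNorm_le_bound _ (norm_nonneg f)
    intro ξ
    have : ‖Bc ξ‖ = ‖(ContinuousLinearMap.smulRightL ℂ H H) (innerSL ℂ f) ξ‖ := rfl
    rw [this]
    show ‖(innerSL ℂ f).smulRight ξ‖ ≤ ‖f‖ * ‖ξ‖
    rw [ContinuousLinearMap.norm_smulRight_apply, innerSL_apply_norm]
  set Ac : ↥𝒜 →L[ℂ] H := (ContinuousLinearMap.apply ℂ H g).comp 𝒜.subtypeL with hAc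
  have hAcnorm : ‖Ac‖ ≤ ‖g‖ := by
    apply ContinuousLinearMap.opNorm_le_bound _ (norm_nonneg g)
    intro T
    have : Ac T = (T : H →L[ℂ] H) g := rfl
    rw [this, mul_comm]
    exact ContinuousLinearMap.le_opNorm _ _
  have hS : (Ac.comp Φ).comp Bc = ∑ i, ((inner ℂ f ((B i) g) : ℂ)) • A i := by
    ext ξ
    have h1 : ((Ac.comp Φ).comp Bc) ξ = ((Φ (Bc ξ) : H →L[ℂ] H)) g := rfl
    rw [h1, hΦ (Bc ξ)]
    have h2 : (Bc ξ : H →L[ℂ] H) = (innerSL ℂ f).smulRight ξ := rfl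
    rw [ContinuousLinearMap.sum_apply, ContinuousLinearMap.sum_apply]
    apply Finset.sum_congr rfl
    intro i _
    rw [h2]
    show (A i) (((innerSL ℂ f).smulRight ξ) ((B i) g)) = ((inner ℂ f ((B i) g) : ℂ)) • (A i) ξ
    rw [ContinuousLinearMap.smulRight_apply, map_smul]
    rfl
  -- scaling
  set c1 : ℝ := 1 + ‖f‖ with hc1
  set c2 : ℝ := 1 + ‖g‖ with hc2
  have hc1pos : (0:ℝ) < c1 := by positivity
  have hc2pos : (0:ℝ) < c2 := by positivity
  set Bc' : H →L[ℂ] ↥𝒜 := ((c1⁻¹ : ℝ) : ℂ) • Bc with hBc'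
  set Ac' : ↥𝒜 →L[ℂ] H := ((c2⁻¹ : ℝ) : ℂ) • Ac with hAc'
  have hBc'norm : ‖Bc'‖ ≤ 1 := by
    refine le_trans (ContinuousLinearMap.opNorm_smul_le _ _) ?_
    rw [Complex.norm_real, Real.norm_of_nonneg (by positivity)]
    rw [inv_mul_le_iff₀ hc1pos, mul_one]
    calc ‖Bc‖ ≤ ‖f‖ := hBcnorm
      _ ≤ c1 := by rw [hc1]; linarith
  have hAc'norm : ‖Ac'‖ ≤ 1 := by
    refine le_trans (ContinuousLinearMap.opNorm_smul_le _ _) ?_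
    rw [Complex.norm_real, Real.norm_of_nonneg (by positivity)]
    rw [inv_mul_le_iff₀ hc2pos, mul_one]
    calc ‖Ac‖ ≤ ‖g‖ := hAcnorm
      _ ≤ c2 := by rw [hc2]; linarith
  have hdecomp : (Ac.comp Φ).comp Bc = ((c1 * c2 : ℝ) : ℂ) • ((Ac'.comp Φ).comp Bc') := by
    have h1 : (Ac'.comp Φ).comp Bc' =
        ((((c1⁻¹ : ℝ) : ℂ)) * (((c2⁻¹ : ℝ) : ℂ))) • ((Ac.comp Φ).comp Bc) := by
      simp only [hAc', hBc', ContinuousLinearMap.comp_smul, ContinuousLinearMap.smul_comp,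
        smul_smul]
      try module
    have hc1ne : ((c1 : ℝ) : ℂ) ≠ 0 := Complex.ofReal_ne_zero.mpr hc1pos.ne'
    have hc2ne : ((c2 : ℝ) : ℂ) ≠ 0 := Complex.ofReal_ne_zero.mpr hc2pos.ne'
    have hsc : ((c1 * c2 : ℝ) : ℂ) * ((((c1⁻¹ : ℝ) : ℂ)) * (((c2⁻¹ : ℝ) : ℂ))) = 1 := by
      push_cast
      field_simp
    rw [h1, smul_smul, hsc, one_smul]
  calc approxNum (∑ i, ((inner ℂ f ((B i) g) : ℂ)) • A i) n
      = approxNum (((c1 * c2 : ℝ) : ℂ) • ((Ac'.comp Φ).comp Bc')) n := by rw [← hS, hdecomp]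
    _ ≤ ‖((c1 * c2 : ℝ) : ℂ)‖ * approxNum ((Ac'.comp Φ).comp Bc') n :=
        approxNum_smul_le _ _ hn
    _ ≤ (c1 * c2) * hilbertNum Φ n := by
        rw [Complex.norm_real, Real.norm_of_nonneg (by positivity)]
        apply mul_le_mul_of_nonneg_left _ (by positivity)
        exact le_hilbertNum Φ hn H H Bc' Ac' hBc'norm hAc'norm
    _ = ((1 + ‖f‖) * (1 + ‖g‖)) * hilbertNum Φ n := by rw [hc1, hc2]

end OpLemmas
section SpanLemma

variable {H : Type u} [NormedAddCommGroup H] [InnerProductSpace ℂ H] [CompleteSpace H]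

lemma exists_pairs {m : ℕ} (B : Fin m → H →L[ℂ] H) (hBli : LinearIndependent ℂ B)
    (i0 : Fin m) :
    ∃ (r : ℕ) (c : Fin r → ℂ) (g f : Fin r → H), 0 < r ∧
      ∀ i : Fin m, (∑ t, c t * (inner ℂ (f t) ((B i) (g t)) : ℂ)) =
        if i = i0 then 1 else 0 := by
  set w : H × H → (Fin m → ℂ) := fun p i => (inner ℂ p.2 ((B i) p.1) : ℂ) with hw
  have hspan : Submodule.span ℂ (Set.range w) = ⊤ := by
    by_contra hne
    obtain ⟨φ, hφ0, hφ⟩ := Submodule.exists_dual_map_eq_bot_of_lt_top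
      (lt_top_iff_ne_top.mpr hne) inferInstance
    set u : Fin m → ℂ := fun i => φ (Pi.single i 1) with hu
    have hφeval : ∀ x : Fin m → ℂ, φ x = ∑ i, x i * u i := by
      intro x
      have hx : x = ∑ i, x i • (Pi.single i 1 : Fin m → ℂ) := by
        funext j
        rw [Finset.sum_apply]
        simp [Pi.single_apply, Finset.sum_ite_eq' Finset.univ j]
      calc φ x = φ (∑ i, x i • (Pi.single i 1 : Fin m → ℂ)) := by rw [← hx]
        _ = ∑ i, x i * u i := by rw [map_sum]; simp [hu, smul_eq_mul]
    have hvanish : ∀ p : H × H, φ (w p) = 0 := by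
      intro p
      have : w p ∈ Submodule.span ℂ (Set.range w) :=
        Submodule.subset_span (Set.mem_range_self p)
      have hmem : φ (w p) ∈ Submodule.map φ (Submodule.span ℂ (Set.range w)) :=
        Submodule.mem_map_of_mem this
      rw [hφ] at hmem
      simpa using hmem
    have hBzero : (∑ i, u i • B i) = 0 := by
      ext g
      have hinner : ∀ f : H, (inner ℂ f ((∑ i, u i • B i) g) : ℂ) = 0 := by
        intro f
        have h1 : ((∑ i, u i • B i) g) = ∑ i, u i • (B i) g := by
          rw [ContinuousLinearMap.sum_apply]
          exact Finset.sum_congr rfl fun i _ => rfl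
        rw [h1, inner_sum]
        have h2 : ∀ i, (inner ℂ f (u i • (B i) g) : ℂ) = w (g, f) i * u i := by
          intro i
          rw [inner_smul_right]
          simp [hw]
          ring
        rw [Finset.sum_congr rfl fun i _ => h2 i, ← hφeval, hvanish]
      have := hinner ((∑ i, u i • B i) g)
      rw [inner_self_eq_zero] at this
      simpa using this
    have hu0 : u = 0 := by
      have := Fintype.linearIndependent_iff.mp hBli u ?_
      · funext i; exact this i
      · exact hBzero
    apply hφ0
    apply LinearMap.ext
    intro x
    rw [hφeval x, hu0]
    simp
  have hmem : (Pi.single i0 (1:ℂ) : Fin m → ℂ) ∈ Submodule.span ℂ (Set.range w) := by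
    rw [hspan]; trivial
  obtain ⟨r, c, v, hsum⟩ := Submodule.mem_span_set'.mp hmem
  have hpre : ∀ t : Fin r, ∃ p : H × H, w p = (v t : Fin m → ℂ) := fun t => (v t).2
  choose p hp using hpre
  have heval : ∀ i : Fin m, (∑ t, c t * (inner ℂ ((p t).2) ((B i) ((p t).1)) : ℂ)) =
      if i = i0 then 1 else 0 := by
    intro i
    have := congrFun hsum i
    rw [Finset.sum_apply] at this
    have h2 : ∑ t, (c t • (v t : Fin m → ℂ)) i = if i = i0 then 1 else 0 := by
      rw [this, Pi.single_apply]
    rw [← h2]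
    apply Finset.sum_congr rfl
    intro t _
    rw [← hp t]
    simp [hw, smul_eq_mul]
  have hrpos : 0 < r := by
    by_contra hr0
    have hr : r = 0 := by omega
    subst hr
    have := heval i0
    simp at this
  exact ⟨r, c, fun t => (p t).1, fun t => (p t).2, hrpos, heval⟩

end SpanLemma

/-- Let `𝒜` be a C*-subalgebra of `B(H)` containing `K(H)`, let
`A₁,…,Aₘ,B₁,…,Bₘ ∈ 𝒜` and `Φ = Σᵢ M_{Aᵢ,Bᵢ} : 𝒜 → 𝒜`.  If `B₁,…,Bₘ` are linearly
independent, then there are `r ≥ 1` and `C > 0` with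
`a_{rn−r+1}(Aᵢ) ≤ C hₙ(Φ)` for all `n ≥ 1` and all `i`; in particular, if `𝔦` is a
Calkin space containing `(hₙ(Φ))ₙ` then `(aₙ(Aᵢ))ₙ ∈ 𝔦` for every `i`. -/
theorem symbols_dominated_by_hilbertNum {H : Type u} [NormedAddCommGroup H]
    [InnerProductSpace ℂ H] [CompleteSpace H]
    (𝒜 : Submodule ℂ (H →L[ℂ] H))
    (h𝒜mul : ∀ x ∈ 𝒜, ∀ y ∈ 𝒜, x * y ∈ 𝒜)
    (h𝒜star : ∀ x ∈ 𝒜, star x ∈ 𝒜)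
    (h𝒜closed : IsClosed (𝒜 : Set (H →L[ℂ] H)))
    (h𝒜K : ∀ T : H →L[ℂ] H, IsCompactOperator ⇑T → T ∈ 𝒜)
    (m : ℕ) (A B : Fin m → H →L[ℂ] H)
    (hA : ∀ i, A i ∈ 𝒜) (hB : ∀ i, B i ∈ 𝒜)
    (Φ : 𝒜 →L[ℂ] 𝒜)
    (hΦ : ∀ X : 𝒜, (Φ X : H →L[ℂ] H) = ∑ i, A i * (X : H →L[ℂ] H) * B i)
    (hBli : LinearIndependent ℂ B) :
    (∃ r : ℕ, 0 < r ∧ ∃ C : ℝ, 0 < C ∧ ∀ n : ℕ, 1 ≤ n → ∀ i : Fin m,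
      approxNum (A i) (r * n - r + 1) ≤ C * hilbertNum Φ n) ∧
    (∀ I : Set (ℕ → ℂ), IsCalkinSpace I →
      toC (fun n => hilbertNum Φ (n + 1)) ∈ I → ∀ i : Fin m, toC (sSeq (A i)) ∈ I) := by
  have part1 : ∃ r : ℕ, 0 < r ∧ ∃ C : ℝ, 0 < C ∧ ∀ n : ℕ, 1 ≤ n → ∀ i : Fin m,
      approxNum (A i) (r * n - r + 1) ≤ C * hilbertNum Φ n := by
    have key : ∀ i0 : Fin m, ∃ (r : ℕ) (C : ℝ), 0 < r ∧ 0 ≤ C ∧ ∀ n : ℕ, 1 ≤ n →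
        approxNum (A i0) (r * n - r + 1) ≤ C * hilbertNum Φ n := by
      intro i0
      obtain ⟨r, c, g, f, hrpos, heval⟩ := exists_pairs B hBli i0
      refine ⟨r, ∑ t, ‖c t‖ * ((1 + ‖f t‖) * (1 + ‖g t‖)), hrpos,
        Finset.sum_nonneg fun t _ => by positivity, ?_⟩
      intro n hn
      haveI : Nonempty (Fin r) := ⟨⟨0, hrpos⟩⟩
      have hA0 : A i0 = ∑ t, c t • (∑ i, ((inner ℂ (f t) ((B i) (g t)) : ℂ)) • A i) := by
        have h1 : ∀ t : Fin r, c t • (∑ i, ((inner ℂ (f t) ((B i) (g t)) : ℂ)) • A i)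
            = ∑ i, (c t * (inner ℂ (f t) ((B i) (g t)) : ℂ)) • A i := by
          intro t
          rw [Finset.smul_sum]
          exact Finset.sum_congr rfl fun i _ => smul_smul _ _ _
        rw [Finset.sum_congr rfl fun t _ => h1 t, Finset.sum_comm]
        have h2 : ∀ i' : Fin m, ∑ t, (c t * (inner ℂ (f t) ((B i') (g t)) : ℂ)) • A i'
            = (∑ t, c t * (inner ℂ (f t) ((B i') (g t)) : ℂ)) • A i' :=
          fun i' => (Finset.sum_smul).symm
        rw [Finset.sum_congr rfl fun i' _ => h2 i',
          Finset.sum_congr rfl fun i' _ => by rw [heval i']]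
        simp [ite_smul, Finset.sum_ite_eq']
      rw [hA0]
      have h2 := approxNum_sum_smul_le (Finset.univ : Finset (Fin r)) Finset.univ_nonempty c
        (fun t => (∑ i, ((inner ℂ (f t) ((B i) (g t)) : ℂ)) • A i)) hn
      rw [Finset.card_univ, Fintype.card_fin] at h2
      refine le_trans h2 ?_
      calc ∑ t, ‖c t‖ * approxNum (∑ i, ((inner ℂ (f t) ((B i) (g t)) : ℂ)) • A i) n
          ≤ ∑ t, ‖c t‖ * (((1 + ‖f t‖) * (1 + ‖g t‖)) * hilbertNum Φ n) :=
            Finset.sum_le_sum fun t _ => mul_le_mul_of_nonneg_left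
              (elementary_bound 𝒜 h𝒜K m A B Φ hΦ (f t) (g t) hn) (norm_nonneg _)
        _ = (∑ t, ‖c t‖ * ((1 + ‖f t‖) * (1 + ‖g t‖))) * hilbertNum Φ n := by
            rw [Finset.sum_mul]
            exact Finset.sum_congr rfl fun t _ => by ring
    choose rr CC hrr hCC hbound using key
    refine ⟨1 + Finset.univ.sup rr, by omega, 1 + ∑ i, CC i, by
      have : (0:ℝ) ≤ ∑ i, CC i := Finset.sum_nonneg fun j _ => hCC j
      linarith, ?_⟩
    intro n hn i
    have hle : rr i ≤ 1 + Finset.univ.sup rr :=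
      le_trans (Finset.le_sup (Finset.mem_univ i)) (by omega)
    have hidx : rr i * n - rr i + 1 ≤ (1 + Finset.univ.sup rr) * n - (1 + Finset.univ.sup rr) + 1 := by
      obtain ⟨k, rfl⟩ : ∃ k, n = k + 1 := ⟨n - 1, by omega⟩
      have e1 : ∀ a : ℕ, a * (k + 1) - a = a * k := fun a => by
        rw [Nat.mul_succ, Nat.add_sub_cancel]
      rw [e1, e1]
      have := Nat.mul_le_mul_right k hle
      omega
    calc approxNum (A i) ((1 + Finset.univ.sup rr) * n - (1 + Finset.univ.sup rr) + 1)
        ≤ approxNum (A i) (rr i * n - rr i + 1) := approxNum_antitone _ (by omega) hidx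
      _ ≤ CC i * hilbertNum Φ n := hbound i n hn
      _ ≤ (1 + ∑ i, CC i) * hilbertNum Φ n := by
          apply mul_le_mul_of_nonneg_right _ (hilbertNum_nonneg Φ n)
          have : CC i ≤ ∑ j, CC j := Finset.single_le_sum (fun j _ => hCC j) (Finset.mem_univ i)
          linarith
  refine ⟨part1, ?_⟩
  intro I hI hhI i
  obtain ⟨r, hr, C, hC, hbound⟩ := part1
  obtain ⟨hIc0, hI0, hIadd, hIsmul, hIdom⟩ := hI
  set h : ℕ → ℝ := fun k => hilbertNum Φ (k + 1) with hh
  have hh0 : ∀ k, 0 ≤ h k := fun k => hilbertNum_nonneg Φ (k + 1)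
  have hhmono : ∀ {a b : ℕ}, a ≤ b → h b ≤ h a := fun {a b} hab =>
    hilbertNum_antitone Φ (by omega) (by omega)
  set s : ℕ → ℝ := sSeq (A i) with hs
  have hs0 : ∀ k, 0 ≤ s k := fun k => approxNum_nonneg _ _
  have hsmono : ∀ {a b : ℕ}, a ≤ b → s b ≤ s a := fun {a b} hab =>
    approxNum_antitone _ (by omega) (by omega)
  have hsh : ∀ k, s k ≤ C * h (k / r) := by
    intro k
    have h1 : r * (k / r) + 1 ≤ k + 1 := by
      have h2 : r * (k / r) ≤ k := by rw [Nat.mul_comm]; exact Nat.div_mul_le_self k r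
      omega
    have h2 : r * (k / r + 1) - r + 1 = r * (k / r) + 1 := by
      rw [Nat.mul_succ, Nat.add_sub_cancel]
    have h3 := hbound (k / r + 1) (Nat.le_add_left 1 _) i
    rw [h2] at h3
    calc s k = approxNum (A i) (k + 1) := rfl
      _ ≤ approxNum (A i) (r * (k / r) + 1) := approxNum_antitone _ (Nat.le_add_left 1 _) h1
      _ ≤ C * hilbertNum Φ (k / r + 1) := h3
      _ = C * h (k / r) := rfl
  have hCh0 : ∀ k, 0 ≤ C * h k := fun k => mul_nonneg hC.le (hh0 k)
  have hChm : ∀ {a b : ℕ}, a ≤ b → C * h b ≤ C * h a := fun {a b} hab =>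
    mul_le_mul_of_nonneg_left (hhmono hab) hC.le
  have hhc0 : Filter.Tendsto h Filter.atTop (nhds 0) := by
    have h1 : Filter.Tendsto (toC h) Filter.atTop (nhds 0) := hIc0 hhI
    have h2 := (Complex.continuous_re.tendsto 0).comp h1
    simpa [toC, Function.comp_def] using h2
  have hdiv : Filter.Tendsto (fun k : ℕ => k / r) Filter.atTop Filter.atTop :=
    Filter.tendsto_atTop_atTop.mpr fun b =>
      ⟨b * r, fun a ha => (Nat.le_div_iff_mul_le hr).mpr ha⟩
  have hhc0' : Filter.Tendsto (fun k : ℕ => C * h (k / r)) Filter.atTop (nhds 0) := by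
    have := (hhc0.comp hdiv).const_mul C
    simpa using this
  set γ : ℕ → ℕ → ℂ := fun j k => if k % r = j then ((C * h (k / r) : ℝ) : ℂ) else 0 with hγ
  have hCh : (C : ℂ) • toC h ∈ I := hIsmul _ _ hhI
  have hCheq : (C : ℂ) • toC h = toC (fun k => C * h k) := by
    funext k
    simp [toC, smul_eq_mul, Complex.ofReal_mul]
  have hγI : ∀ j, j < r → γ j ∈ I := by
    intro j hj
    apply hIdom _ hCh
    · show Filter.Tendsto (γ j) Filter.atTop (nhds 0)
      apply squeeze_zero_norm _ hhc0'
      intro k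
      by_cases hk : k % r = j
      · simp only [hγ, if_pos hk]
        rw [Complex.norm_real, Real.norm_of_nonneg (hCh0 _)]
      · simp only [hγ, if_neg hk, norm_zero]
        exact hCh0 _
    · intro n
      have h1 := rearr_indicator_le hh0 @hhmono hC.le hj n
      rw [hCheq, rearr_toC_antitone hCh0 @hChm]
      exact h1
  have hγsum : (∑ j ∈ Finset.range r, γ j) ∈ I :=
    Finset.sum_induction γ (· ∈ I) (fun a b ha hb => hIadd a ha b hb) hI0
      (fun j hj => hγI j (Finset.mem_range.mp hj))
  have hγeq : (∑ j ∈ Finset.range r, γ j) = toC (fun k => C * h (k / r)) := by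
    funext k
    rw [Finset.sum_apply]
    rw [Finset.sum_eq_single (k % r)]
    · simp [hγ, toC]
    · intro b hb hbne
      simp only [hγ]
      exact if_neg fun hkb => hbne hkb.symm
    · intro hnotmem
      exact absurd (Finset.mem_range.mpr (Nat.mod_lt k hr)) hnotmem
  apply hIdom _ (hγeq ▸ hγsum)
  · show Filter.Tendsto (toC s) Filter.atTop (nhds 0)
    apply squeeze_zero_norm _ hhc0'
    intro k
    rw [norm_toC hs0]
    exact hsh k
  · intro n
    rw [rearr_toC_antitone hs0 @hsmono]
    have e2 : rearr (toC fun k => C * h (k / r)) n = C * h (n / r) :=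
      rearr_toC_antitone (fun k => hCh0 _) (fun {a b} hab => hChm (Nat.div_le_div_right hab)) n
    rw [e2]
    exact hsh n
end
end
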